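/- Let T be a type, let D ⊆ ℕ⁴ be closed under addition of each of the vectors u₁ = (1,1,0,1), u₂ = (1,0,1,1), u₃ = (0,1,1,1), u₄ = (0,0,0,1), and let f : ℕ⁴ → T satisfy f(x+uᵢ) = f(x) for every x ∈ D and every i ∈ {1,2,3,4}. Then for all (a,b,c,m) and (a',b',c',m') in D with a+b+c ≡ a'+b'+c' (mod 2), one has f(a,b,c,m) = f(a',b',c',m'). -/
import Mathlib


/-- If `D ⊆ ℕ⁴` is closed under addition of `u₁ = (1,1,0,1)`, `u₂ = (1,0,1,1)`,
`u₃ = (0,1,1,1)`, `u₄ = (0,0,0,1)`, and `f : ℕ⁴ → T` satisfies `f (x + uᵢ) = f x` for all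
`x ∈ D` and each `i`, then `f` takes the same value at any two points of `D` whose
coordinate sums `a + b + c` have the same parity. -/
theorem constant_on_parity_classes {T : Type*} (D : Set (ℕ × ℕ × ℕ × ℕ))
    (hD : ∀ u ∈ ({(1,1,0,1), (1,0,1,1), (0,1,1,1), (0,0,0,1)} : Set (ℕ × ℕ × ℕ × ℕ)),
      ∀ x ∈ D, x + u ∈ D)
    (f : ℕ × ℕ × ℕ × ℕ → T)
    (hf : ∀ u ∈ ({(1,1,0,1), (1,0,1,1), (0,1,1,1), (0,0,0,1)} : Set (ℕ × ℕ × ℕ × ℕ)),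
      ∀ x ∈ D, f (x + u) = f x)
    (x y : ℕ × ℕ × ℕ × ℕ) (hx : x ∈ D) (hy : y ∈ D)
    (hpar : (x.1 + x.2.1 + x.2.2.1) % 2 = (y.1 + y.2.1 + y.2.2.1) % 2) :
    f x = f y := by
  have key : ∀ u ∈ ({(1,1,0,1), (1,0,1,1), (0,1,1,1), (0,0,0,1)} : Set (ℕ × ℕ × ℕ × ℕ)),
      ∀ n : ℕ, ∀ z ∈ D, z + n • u ∈ D ∧ f (z + n • u) = f z := by
    intro u hu n
    induction n with
    | zero => intro z hz; simp only [zero_smul, add_zero]; exact ⟨hz, trivial⟩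
    | succ n ih =>
      intro z hz
      obtain ⟨h1, h2⟩ := ih z hz
      have he : z + (n + 1) • u = (z + n • u) + u := by
        rw [succ_nsmul, ← add_assoc]
      refine ⟨?_, ?_⟩
      · rw [he]; exact hD u hu _ h1
      · rw [he, hf u hu _ h1, h2]
  obtain ⟨a, b, c, m⟩ := x
  obtain ⟨a', b', c', m'⟩ := y
  simp only at hpar
  obtain ⟨t, ht⟩ : ∃ t, a + b + c + (a' + b' + c') = 2 * t :=
    ⟨(a + b + c + (a' + b' + c')) / 2, by omega⟩
  have hu1 : ((1,1,0,1) : ℕ × ℕ × ℕ × ℕ) ∈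
      ({(1,1,0,1), (1,0,1,1), (0,1,1,1), (0,0,0,1)} : Set (ℕ × ℕ × ℕ × ℕ)) := by simp
  have hu2 : ((1,0,1,1) : ℕ × ℕ × ℕ × ℕ) ∈
      ({(1,1,0,1), (1,0,1,1), (0,1,1,1), (0,0,0,1)} : Set (ℕ × ℕ × ℕ × ℕ)) := by simp
  have hu3 : ((0,1,1,1) : ℕ × ℕ × ℕ × ℕ) ∈
      ({(1,1,0,1), (1,0,1,1), (0,1,1,1), (0,0,0,1)} : Set (ℕ × ℕ × ℕ × ℕ)) := by simp
  have hu4 : ((0,0,0,1) : ℕ × ℕ × ℕ × ℕ) ∈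
      ({(1,1,0,1), (1,0,1,1), (0,1,1,1), (0,0,0,1)} : Set (ℕ × ℕ × ℕ × ℕ)) := by simp
  -- steer x
  have S := a + b + c
  obtain ⟨hx1, hfx1⟩ := key _ hu1 (c + t) _ hx
  obtain ⟨hx2, hfx2⟩ := key _ hu2 (b + t) _ hx1
  obtain ⟨hx3, hfx3⟩ := key _ hu3 (a + t) _ hx2
  obtain ⟨hx4, hfx4⟩ := key _ hu4 (m' + (a' + b' + c') + 3 * (a + b + c)) _ hx3
  -- steer y
  obtain ⟨hy1, hfy1⟩ := key _ hu1 (c' + (a + b + c)) _ hy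
  obtain ⟨hy2, hfy2⟩ := key _ hu2 (b' + (a + b + c)) _ hy1
  obtain ⟨hy3, hfy3⟩ := key _ hu3 (a' + (a + b + c)) _ hy2
  obtain ⟨hy4, hfy4⟩ := key _ hu4 (m + (a + b + c) + 3 * t) _ hy3
  have heq : ((a, b, c, m) : ℕ × ℕ × ℕ × ℕ) + (c + t) • (1,1,0,1) + (b + t) • (1,0,1,1)
        + (a + t) • (0,1,1,1) + (m' + (a' + b' + c') + 3 * (a + b + c)) • (0,0,0,1)
      = ((a', b', c', m') : ℕ × ℕ × ℕ × ℕ) + (c' + (a + b + c)) • (1,1,0,1)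
        + (b' + (a + b + c)) • (1,0,1,1) + (a' + (a + b + c)) • (0,1,1,1)
        + (m + (a + b + c) + 3 * t) • (0,0,0,1) := by
    simp only [Prod.smul_mk, smul_eq_mul, Prod.mk_add_mk, Prod.mk.injEq]
    omega
  rw [← hfx1, ← hfx2, ← hfx3, ← hfx4, ← hfy1, ← hfy2, ← hfy3, ← hfy4, heq]
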